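/- arXiv:2106.08289 — 2 statements merged into one kernel-verified Lean document; each statement's English description precedes it below -/
import Mathlib

section
/- Let n be an odd positive integer, let X = Z_n be the dihedral quandle (x▷y = 2y − x in Z_n), and let k be a field of characteristic zero. Then the only derivation of the quandle algebra k[X] is the zero map; i.e., the derivation algebra of k[X] is trivial. -/
/-- The quandle algebra multiplication on `X →₀ k`, as a bilinear map,
determined on basis vectors by `e_x · e_y = e_{op x y}`. -/
noncomputable def qmul {k X : Type*} [Field k] (op : X → X → X) :
    (X →₀ k) →ₗ[k] (X →₀ k) →ₗ[k] (X →₀ k) :=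
  Finsupp.lsum k fun x =>
    LinearMap.toSpanSingleton k ((X →₀ k) →ₗ[k] (X →₀ k))
      (Finsupp.lsum k fun y =>
        LinearMap.toSpanSingleton k (X →₀ k) (Finsupp.single (op x y) (1 : k)))

/-- A derivation of the quandle algebra: a linear map satisfying the Leibniz rule. -/
def IsDerivation {k X : Type*} [Field k] (op : X → X → X)
    (D : (X →₀ k) →ₗ[k] (X →₀ k)) : Prop :=
  ∀ a b : X →₀ k, D (qmul op a b) = qmul op (D a) b + qmul op a (D b)
lemma qmul_single {k X : Type*} [Field k] (op : X → X → X) (x y : X) :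
    qmul op (Finsupp.single x (1:k)) (Finsupp.single y (1:k)) = Finsupp.single (op x y) 1 := by
  rw [qmul]
  rw [Finsupp.lsum_single, LinearMap.toSpanSingleton_apply, one_smul,
    Finsupp.lsum_single, LinearMap.toSpanSingleton_apply, one_smul]

lemma qmul_right {k X : Type*} [Field k] (op : X → X → X) (a : X →₀ k) (y : X) :
    qmul op a (Finsupp.single y (1:k)) = a.mapDomain (fun x => op x y) := by
  induction a using Finsupp.induction_linear with
  | zero => simp
  | add f g hf hg => simp [Finsupp.mapDomain_add, hf, hg]
  | single x c =>
      have h : (Finsupp.single x c : X →₀ k) = c • Finsupp.single x 1 := by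
        simp [Finsupp.smul_single]
      rw [h, map_smul, LinearMap.smul_apply, qmul_single, Finsupp.mapDomain_smul,
        Finsupp.mapDomain_single, Finsupp.smul_single, smul_eq_mul, mul_one]

lemma qmul_left {k X : Type*} [Field k] (op : X → X → X) (x : X) (b : X →₀ k) :
    qmul op (Finsupp.single x (1:k)) b = b.mapDomain (fun y => op x y) := by
  induction b using Finsupp.induction_linear with
  | zero => simp
  | add f g hf hg => simp [Finsupp.mapDomain_add, hf, hg]
  | single y c =>
      have h : (Finsupp.single y c : X →₀ k) = c • Finsupp.single y 1 := by
        simp [Finsupp.smul_single]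
      rw [h, map_smul, qmul_single, Finsupp.mapDomain_smul,
        Finsupp.mapDomain_single, Finsupp.smul_single, smul_eq_mul, mul_one]

/-- For an odd positive integer `n` and a field `k` of characteristic zero, the only derivation
of the quandle algebra of the dihedral quandle `Z_n` (with `x ▷ y = 2y - x`) is the zero map. -/
theorem dihedral_odd_derivation_trivial {k : Type*} [Field k] [CharZero k]
    (n : ℕ) (hn : Odd n) (hpos : 0 < n)
    (D : (ZMod n →₀ k) →ₗ[k] (ZMod n →₀ k))
    (hD : IsDerivation (fun x y : ZMod n => 2 * y - x) D) :
    D = 0 := by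
  haveI : NeZero n := ⟨hpos.ne'⟩
  have hcop : Nat.Coprime 2 n := by
    exact Nat.coprime_two_left.mpr hn
  have hu : IsUnit (2 : ZMod n) := by
    have := (ZMod.isUnit_iff_coprime 2 n).mpr hcop
    simpa using this
  set t : ZMod n := ((hu.unit⁻¹ : (ZMod n)ˣ) : ZMod n) with ht
  have htt : (2 : ZMod n) * t = 1 := by
    have h := hu.unit.mul_inv
    rw [IsUnit.unit_spec] at h
    exact h
  set d : ZMod n → ZMod n → k := fun w x => D (Finsupp.single x 1) w with hd
  have R : ∀ x y w : ZMod n, d w (2*y - x) = d (2*y - w) x + d (t*(w+x)) y := by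
    intro x y w
    have h := hD (Finsupp.single x 1) (Finsupp.single y 1)
    rw [qmul_single, qmul_right, qmul_left] at h
    have hw := DFunLike.congr_fun h w
    rw [Finsupp.add_apply] at hw
    have i1 : Function.Injective (fun z : ZMod n => 2*y - z) := by
      intro a b hab
      simpa using sub_right_injective hab
    have i2 : Function.Injective (fun z : ZMod n => 2*z - x) := by
      intro a b hab
      have h2 : (2:ZMod n)*a = 2*b := by
        have := sub_left_injective hab
        simpa using this
      exact hu.mul_left_cancel h2
    have e1 : w = 2*y - (2*y - w) := by ring
    have e2 : w = 2*(t*(w+x)) - x := by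
      rw [← mul_assoc, htt, one_mul]; ring
    have A : (Finsupp.mapDomain (fun z : ZMod n => 2*y - z) (D (Finsupp.single x 1))) w
        = d (2*y-w) x := by
      conv_lhs => rw [e1]
      exact Finsupp.mapDomain_apply i1 _ _
    have B : (Finsupp.mapDomain (fun z : ZMod n => 2*z - x) (D (Finsupp.single y 1))) w
        = d (t*(w+x)) y := by
      conv_lhs => rw [e2]
      exact Finsupp.mapDomain_apply i2 _ _
    rw [A, B] at hw
    exact hw
  -- shift coefficients
  set c : ZMod n → ZMod n → k := fun a x => d (x+a) x with hc
  have Rstar : ∀ a x y : ZMod n, c a (2*y - x) = c (-a) x + c (t*a) y := by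
    intro a x y
    have h := R x y ((2*y - x) + a)
    have ha1 : 2*y - ((2*y - x)+a) = x + (-a) := by ring
    have ha2 : t * (((2*y-x)+a) + x) = y + t*a := by
      have h3 : ((2*y-x)+a)+x = 2*y + a := by ring
      rw [h3, mul_add, ← mul_assoc, mul_comm t 2, htt, one_mul]
    rw [ha1, ha2] at h
    exact h
  -- step: differences of c in x equal differences in y
  have step : ∀ a s x y : ZMod n,
      c (-a) x - c (-a) (x + 2*s) = c (t*a) (y+s) - c (t*a) y := by
    intro a s x y
    have k1 := Rstar a x y
    have k2 := Rstar a (x+2*s) (y+s)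
    have h3 : 2*(y+s) - (x+2*s) = 2*y-x := by ring
    rw [h3] at k2
    have := k1.symm.trans k2
    linear_combination this
  have Hind : ∀ (a u x x' : ZMod n), c a x - c a (x+u) = c a x' - c a (x'+u) := by
    intro a u x x'
    have h1 := step (-a) (t*u) x 0
    have h2 := step (-a) (t*u) x' 0
    rw [neg_neg] at h1 h2
    have h3 : 2*(t*u) = u := by rw [← mul_assoc, htt, one_mul]
    rw [h3] at h1 h2
    exact h1.trans h2.symm
  -- additivity of phi a u := c a 0 - c a u
  have Hadd : ∀ (a u v : ZMod n),
      c a 0 - c a (u+v) = (c a 0 - c a u) + (c a 0 - c a v) := by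
    intro a u v
    have h1 := Hind a v u 0
    rw [zero_add] at h1
    linear_combination h1
  have Hnat : ∀ (a : ZMod n) (m : ℕ),
      c a 0 - c a ((m : ZMod n)) = (m : k) * (c a 0 - c a 1) := by
    intro a m
    induction m with
    | zero => simp
    | succ p ih =>
        push_cast
        rw [Hadd a p 1, ih]
        ring
  have Hconst : ∀ a x : ZMod n, c a x = c a 0 := by
    intro a x
    have hone : c a 0 - c a 1 = 0 := by
      have h1 := Hnat a n
      rw [ZMod.natCast_self] at h1
      simp only [sub_self] at h1
      have hne : (n : k) ≠ 0 := Nat.cast_ne_zero.mpr hpos.ne'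
      have h2 : (n:k) * (c a 0 - c a 1) = 0 := h1.symm
      exact (mul_eq_zero.mp h2).resolve_left hne
    obtain ⟨m, hm⟩ := (ZMod.natCast_rightInverse (n := n)).surjective x
    have := Hnat a m
    rw [hm, hone, mul_zero] at this
    linear_combination -this
  set e : ZMod n → k := fun a => c a 0 with he
  have RE : ∀ a : ZMod n, e a = e (-a) + e (t*a) := by
    intro a
    have h := Rstar a 0 0
    have h0 : (2:ZMod n)*0 - 0 = 0 := by ring
    rw [h0] at h
    exact h
  have Hodd : ∀ b : ZMod n, e b + e (-b) = 0 := by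
    intro b
    have h1 := RE (2*b)
    have h2 := RE (-(2*b))
    have hb : t*(2*b) = b := by rw [← mul_assoc, mul_comm t 2, htt, one_mul]
    have hb' : t*(-(2*b)) = -b := by rw [mul_neg, hb]
    rw [hb] at h1
    rw [hb', neg_neg] at h2
    linear_combination -h1 - h2
  have Hdouble : ∀ a : ZMod n, e (t*a) = 2 * e a := by
    intro a
    have h1 := RE a
    have h2 := Hodd a
    linear_combination -h1 - h2
  have Hiter : ∀ (m : ℕ) (a : ZMod n), e (t^m * a) = 2^m * e a := by
    intro m
    induction m with
    | zero => intro a; simp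
    | succ p ih =>
        intro a
        have : t^(p+1) * a = t^p * (t*a) := by ring
        rw [this, ih (t*a), Hdouble]
        ring
  have Hezero : ∀ a : ZMod n, e a = 0 := by
    intro a
    set r := orderOf hu.unit with hr
    have hrpos : 0 < r := orderOf_pos hu.unit
    have htr : t^r = 1 := by
      have h1 : (hu.unit⁻¹)^r = 1 := by
        rw [inv_pow, pow_orderOf_eq_one, inv_one]
      calc t^r = ((hu.unit⁻¹ : (ZMod n)ˣ) : ZMod n)^r := by rw [ht]
        _ = (((hu.unit⁻¹)^r : (ZMod n)ˣ) : ZMod n) := by rw [Units.val_pow_eq_pow_val]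
        _ = 1 := by rw [h1]; rfl
    have h1 := Hiter r a
    rw [htr, one_mul] at h1
    have h2 : ((2:k)^r - 1) * e a = 0 := by linear_combination -h1
    have h3 : (2:k)^r - 1 ≠ 0 := by
      have hcast : (2:k)^r = ((2^r : ℕ) : k) := by push_cast; ring
      rw [hcast, sub_ne_zero]
      intro hcon
      have h4 : (2^r : ℕ) = 1 := by exact_mod_cast hcon
      have h2r : 1 < 2^r := Nat.one_lt_two_pow_iff.mpr hrpos.ne'
      omega
    have := (mul_eq_zero.mp h2).resolve_left h3
    exact this
  -- conclude d = 0
  have Hdzero : ∀ w x : ZMod n, d w x = 0 := by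
    intro w x
    have h1 : d w x = c (w - x) x := by
      show d w x = d (x + (w - x)) x
      congr 1
      ring
    rw [h1, Hconst]
    exact Hezero _
  apply Finsupp.lhom_ext
  intro x b
  have hb : (Finsupp.single x b : ZMod n →₀ k) = b • Finsupp.single x 1 := by simp
  have hzero : D (Finsupp.single x (1:k)) = 0 := by
    ext w
    exact Hdzero w x
  rw [hb, map_smul, hzero, smul_zero]
  simp
end

section
/- Let k be a field of characteristic zero, let K ≥ 1, set n = 4K, and let X = Z_n be the dihedral quandle (x▷y = 2y − x in Z_n). Let D be a derivation of the quandle algebra k[X], with matrix coefficients defined by D(e_t) = Σ_x c_t^x e_x. Then for all t, x, d ∈ Z_n (all index arithmetic in Z_n): c_{t+2d}^x = c_t^{2t+2d−x}, c_t^x = −c_t^{x+2K}, and c_t^x = c_{t+2K}^{x+2K}. -/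
set_option linter.unusedSectionVars false
set_option linter.unusedVariables false
set_option maxHeartbeats 1000000

section QmulEval
variable {k X : Type*} [Field k] [Fintype X] [DecidableEq X] (op : X → X → X)

lemma qmul_apply_single_right (f : X →₀ k) (b x : X) :
    qmul op f (Finsupp.single b 1) x = ∑ a : X, if op a b = x then f a else 0 := by
  rw [qmul, Finsupp.lsum_apply]
  rw [Finsupp.sum_fintype]
  · rw [LinearMap.sum_apply, Finsupp.finset_sum_apply]
    apply Finset.sum_congr rfl
    intro a _
    rw [LinearMap.toSpanSingleton_apply, LinearMap.smul_apply, Finsupp.smul_apply,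
      Finsupp.lsum_single, LinearMap.toSpanSingleton_apply, one_smul, Finsupp.single_apply]
    split <;> simp [mul_comm]
  · intro a; simp

lemma qmul_apply_single_left (f : X →₀ k) (a x : X) :
    qmul op (Finsupp.single a 1) f x = ∑ v : X, if op a v = x then f v else 0 := by
  rw [qmul, Finsupp.lsum_single, LinearMap.toSpanSingleton_apply, one_smul,
    Finsupp.lsum_apply, Finsupp.sum_fintype]
  · rw [Finsupp.finset_sum_apply]
    apply Finset.sum_congr rfl
    intro v _
    rw [LinearMap.toSpanSingleton_apply, Finsupp.smul_apply, Finsupp.single_apply]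
    split <;> simp [mul_comm]
  · intro v; simp

omit [Fintype X] [DecidableEq X] in
lemma qmul_single_single (a b : X) :
    qmul op (Finsupp.single a (1:k)) (Finsupp.single b 1) = Finsupp.single (op a b) 1 := by
  rw [qmul, Finsupp.lsum_single, LinearMap.toSpanSingleton_apply, one_smul,
    Finsupp.lsum_single, LinearMap.toSpanSingleton_apply, one_smul]

end QmulEval

section Fib
variable (K : ℕ)
local notation "n" => 4 * K

lemma two_tk_eq_zero (hK : 1 ≤ K) : (2 * (K : ZMod n)) + (2 * (K : ZMod n)) = 0 := by
  have : ((4 * K : ℕ) : ZMod n) = 0 := ZMod.natCast_self _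
  push_cast at this
  linear_combination this

lemma tk_ne_zero (hK : 1 ≤ K) : (2 * (K : ZMod n)) ≠ 0 := by
  haveI : NeZero n := ⟨by omega⟩
  have h : (2 * (K : ZMod n)) = ((2 * K : ℕ) : ZMod n) := by push_cast; ring
  rw [h, Ne, ZMod.natCast_eq_zero_iff]
  intro hdvd
  have := Nat.le_of_dvd (by omega) hdvd
  omega

lemma double_ker (hK : 1 ≤ K) (y : ZMod n) (hy : 2 * y = 0) :
    y = 0 ∨ y = 2 * (K : ZMod n) := by
  haveI : NeZero n := ⟨by omega⟩
  have hy' : ((y.val : ℕ) : ZMod n) = y := by rw [ZMod.natCast_val, ZMod.cast_id]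
  have hv : ((2 * y.val : ℕ) : ZMod n) = 0 := by push_cast; rw [hy']; exact hy
  rw [ZMod.natCast_eq_zero_iff] at hv
  have hlt : y.val < 4 * K := ZMod.val_lt y
  obtain ⟨m, hm⟩ : ∃ m, y.val = 2 * K * m := by
    rcases hv with ⟨m, hm⟩
    refine ⟨m, ?_⟩
    have h2 : 2 * y.val = 2 * (2 * K * m) := by rw [hm]; ring
    omega
  have hm2 : m < 2 := by
    refine Nat.lt_of_mul_lt_mul_left (a := 2 * K) ?_
    rw [← hm]
    omega
  interval_cases m
  · left; rw [← hy', hm]; simp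
  · right; rw [← hy', hm]; push_cast; ring

lemma fiber_eq (hK : 1 ≤ K) [NeZero n] (s v₀ : ZMod n) (h : 2 * v₀ = s) :
    Finset.univ.filter (fun v => 2 * v = s) = {v₀, v₀ + 2 * (K : ZMod n)} := by
  ext v
  simp only [Finset.mem_filter, Finset.mem_univ, true_and, Finset.mem_insert,
    Finset.mem_singleton]
  constructor
  · intro hv
    have : 2 * (v - v₀) = 0 := by rw [mul_sub, hv, h, sub_self]
    rcases double_ker K hK _ this with h' | h'
    · left; linear_combination h'
    · right; linear_combination h'
  · rintro (rfl | rfl)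
    · exact h
    · rw [mul_add, h]
      linear_combination two_tk_eq_zero K hK

lemma fiber_sum {k : Type*} [Field k] (hK : 1 ≤ K) [NeZero n] (f : ZMod n → k) (s v₀ : ZMod n)
    (h : 2 * v₀ = s) :
    ∑ v ∈ Finset.univ.filter (fun v => 2 * v = s), f v = f v₀ + f (v₀ + 2 * (K : ZMod n)) := by
  rw [fiber_eq K hK s v₀ h, Finset.sum_pair]
  intro he
  exact tk_ne_zero K hK (by linear_combination he.symm)

lemma odd_fiber_empty (hK : 1 ≤ K) [NeZero n] (z : ℕ) (hz : Odd z) :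
    Finset.univ.filter (fun v : ZMod n => 2 * v = (z : ZMod n)) = ∅ := by
  ext v
  simp only [Finset.mem_filter, Finset.mem_univ, true_and, Finset.notMem_empty, iff_false]
  intro hv
  have hdvd : (2 : ℕ) ∣ 4 * K := ⟨2 * K, by ring⟩
  have h0 := congrArg (ZMod.castHom hdvd (ZMod 2)) hv
  have h2' : (2 : ZMod n) = ((2:ℕ) : ZMod n) := by norm_cast
  rw [h2', map_mul, map_natCast, map_natCast] at h0
  have h20 : ((2:ℕ) : ZMod 2) = 0 := by decide
  rw [h20, zero_mul] at h0
  have hz2 : ((z:ℕ) : ZMod 2) = 1 := by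
    have h2z : ((2:ZMod 2)) = 0 := by decide
    rcases hz with ⟨j, rfl⟩; push_cast; rw [h2z]; ring
  rw [hz2] at h0
  exact one_ne_zero h0.symm
end Fib

lemma gamma_zero {k : Type*} [Field k] [CharZero k] (K : ℕ) (hK : 1 ≤ K)
    (γ : ZMod (4*K) → k)
    (P2 : ∀ w, γ (-w) = - γ w)
    (P3 : ∀ z : ℕ, Odd z → γ (z : ZMod (4*K)) = 0)
    (P4 : ∀ w, γ w + γ (w + (K : ZMod (4*K))) = 2 * γ (2 * w)) :
    ∀ u, γ u = 0 := by
  have hKne : K ≠ 0 := by omega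
  set κ := K.factorization 2 with hκ
  set k₀ := K / 2 ^ κ with hk₀
  have hfac : 2 ^ κ * k₀ = K := Nat.ordProj_mul_ordCompl_eq_self K 2
  have hk₀pos : 0 < k₀ := Nat.ordCompl_pos 2 hKne
  have hk₀odd : Odd k₀ := by
    rcases Nat.even_or_odd k₀ with he | ho
    · exact absurd he.two_dvd (Nat.not_dvd_ordCompl Nat.prime_two hKne)
    · exact ho
  clear_value κ k₀
  -- Phase 1
  have phase1 : ∀ a, a ≤ κ → ∀ m : ℕ, Odd m → γ ((2 ^ a * m : ℕ)) = 0 := by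
    intro a
    induction a with
    | zero => intro _ m hm; rw [pow_zero, one_mul]; exact P3 m hm
    | succ a ih =>
      intro ha m hm
      have ha' : a ≤ κ := by omega
      have h1 : γ ((2 ^ a * m : ℕ)) = 0 := ih ha' m hm
      have key := P4 (((2 ^ a * m : ℕ) : ZMod (4*K)))
      have e1 : ((2 ^ a * m : ℕ) : ZMod (4*K)) + (K : ZMod (4*K))
          = ((2 ^ a * m + K : ℕ) : ZMod (4*K)) := by push_cast; ring
      obtain ⟨e, he⟩ : ∃ e, κ = a + (e + 1) := ⟨κ - a - 1, by omega⟩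
      have hKform : 2 ^ a * m + K = 2 ^ a * (m + 2 ^ (e+1) * k₀) := by
        rw [← hfac, he, pow_add]; ring
      have h2 : γ ((2 ^ a * m + K : ℕ)) = 0 := by
        rw [hKform]
        exact ih ha' _ (hm.add_even ⟨2 ^ e * k₀, by ring⟩)
      have e2 : (2 : ZMod (4*K)) * ((2 ^ a * m : ℕ) : ZMod (4*K))
          = ((2 ^ (a+1) * m : ℕ) : ZMod (4*K)) := by push_cast; ring
      rw [e1, h1, h2, e2, zero_add] at key
      exact (mul_eq_zero.mp key.symm).resolve_left two_ne_zero
  -- Phase 2 single step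
  have step : ∀ s : ℕ, γ ((2 ^ (κ+1) * s : ℕ)) = 2 * γ ((2 ^ (κ+1) * (2 * s) : ℕ)) := by
    intro s
    have key := P4 (((2 ^ (κ+1) * s : ℕ) : ZMod (4*K)))
    have e1 : ((2 ^ (κ+1) * s : ℕ) : ZMod (4*K)) + (K : ZMod (4*K))
        = ((2 ^ (κ+1) * s + K : ℕ) : ZMod (4*K)) := by push_cast; ring
    have hKform : 2 ^ (κ+1) * s + K = 2 ^ κ * (2 * s + k₀) := by
      rw [← hfac, pow_add]; ring
    have h2 : γ ((2 ^ (κ+1) * s + K : ℕ)) = 0 := by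
      rw [hKform]
      exact phase1 κ le_rfl _ (by rcases hk₀odd with ⟨j, hj⟩; exact ⟨s + j, by omega⟩)
    have e2 : (2 : ZMod (4*K)) * ((2 ^ (κ+1) * s : ℕ) : ZMod (4*K))
        = ((2 ^ (κ+1) * (2 * s) : ℕ) : ZMod (4*K)) := by push_cast; ring
    rw [e1, h2, e2, add_zero] at key
    exact key
  -- Phase 2 iterate
  have iter : ∀ m s : ℕ, γ ((2 ^ (κ+1) * s : ℕ)) = 2 ^ m * γ ((2 ^ (κ+1) * (2 ^ m * s) : ℕ)) := by
    intro m
    induction m with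
    | zero => intro s; simp
    | succ m ih =>
      intro s
      rw [step s, ih (2 * s)]
      have : 2 ^ m * (2 * s) = 2 ^ (m+1) * s := by ring
      rw [this, pow_succ]
      ring
  -- close the loop on multiples of 2^(κ+2)
  have final2 : ∀ s : ℕ, γ ((2 ^ (κ+2) * s : ℕ)) = 0 := by
    intro s
    set r := Nat.totient k₀ with hr
    have hrpos : 1 ≤ r := Nat.totient_pos.mpr hk₀pos
    have hcop : Nat.Coprime 2 k₀ := by
      rw [Nat.Prime.coprime_iff_not_dvd Nat.prime_two]
      intro h; rcases hk₀odd with ⟨j, hj⟩; omega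
    have hmod : 2 ^ r ≡ 1 [MOD k₀] := Nat.ModEq.pow_totient hcop
    have hiter := iter r (2 * s)
    have hcast : ((2 ^ (κ+1) * (2 ^ r * (2 * s)) : ℕ) : ZMod (4*K))
        = ((2 ^ (κ+1) * (2 * s) : ℕ) : ZMod (4*K)) := by
      rw [ZMod.natCast_eq_natCast_iff]
      have h1 : (2 ^ r * s : ℕ) ≡ (1 * s : ℕ) [MOD k₀] := hmod.mul_right s
      have h2 := h1.mul_left' (c := 2 ^ (κ+2))
      have e1 : 2 ^ (κ+1) * (2 ^ r * (2 * s)) = 2 ^ (κ+2) * (2 ^ r * s) := by ring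
      have e2 : 2 ^ (κ+1) * (2 * s) = 2 ^ (κ+2) * (1 * s) := by ring
      have e3 : 2 ^ (κ+2) * k₀ = 4 * K := by rw [← hfac]; ring
      rw [e1, e2]
      rw [e3] at h2
      exact h2
    rw [hcast] at hiter
    have eA : (2 ^ (κ+1) * (2 * s) : ℕ) = 2 ^ (κ+2) * s := by ring
    rw [eA] at hiter
    have hz : (1 - (2:k) ^ r) * γ ((2 ^ (κ+2) * s : ℕ)) = 0 := by linear_combination hiter
    rcases mul_eq_zero.mp hz with h | h
    · exfalso
      have h2r : ((2:k)) ^ r = ((2 ^ r : ℕ) : k) := by push_cast; ring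
      rw [h2r] at h
      have h1 : ((2 ^ r : ℕ) : k) = 1 := by linear_combination -h
      rw [show (1:k) = ((1:ℕ):k) from by push_cast; ring] at h1
      have := Nat.cast_injective h1
      have h2r1 : 2 ^ r ≥ 2 := by
        calc 2 ^ r ≥ 2 ^ 1 := Nat.pow_le_pow_right (by norm_num) hrpos
        _ = 2 := by norm_num
      omega
    · exact h
  -- Phase 3
  intro u
  haveI : NeZero (4*K) := ⟨by omega⟩
  have hu : u = ((u.val : ℕ) : ZMod (4*K)) := by rw [ZMod.natCast_val, ZMod.cast_id]
  by_cases hz : u.val = 0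
  · have h0 : γ 0 = 0 := by
      have := P2 0; rw [neg_zero] at this; linear_combination (1/2 : k) * this
    rw [hu, hz]; simpa using h0
  · set z := u.val with hzdef
    set az := z.factorization 2 with haz
    set mz := z / 2 ^ az with hmz
    have hzfac : 2 ^ az * mz = z := Nat.ordProj_mul_ordCompl_eq_self z 2
    have hmzodd : Odd mz := by
      rcases Nat.even_or_odd mz with he | ho
      · exact absurd he.two_dvd (Nat.not_dvd_ordCompl Nat.prime_two hz)
      · exact ho
    clear_value az mz
    rw [hu, ← hzfac]
    by_cases hle : az ≤ κ
    · exact phase1 az hle mz hmzodd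
    · obtain ⟨e, he⟩ : ∃ e, az = (κ + 1) + e := ⟨az - κ - 1, by omega⟩
      have h1 : 2 ^ az * mz = 2 ^ (κ+1) * (2 ^ e * mz) := by rw [he, pow_add]; ring
      rw [h1, step]
      have h2 : 2 ^ (κ+1) * (2 * (2 ^ e * mz)) = 2 ^ (κ+2) * (2 ^ e * mz) := by ring
      rw [h2, final2, mul_zero]

section Main
variable {k : Type*} [Field k] [CharZero k] (K : ℕ)
local notation "n" => 4 * K

lemma L1 [NeZero n] (D : (ZMod n →₀ k) →ₗ[k] (ZMod n →₀ k))
    (hD : IsDerivation (fun x y : ZMod n => 2 * y - x) D)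
    (c : ZMod n → ZMod n → k)
    (hc : ∀ t u, D (Finsupp.single t 1) u = c t u) :
    ∀ a b x : ZMod n, c (2 * b - a) x
      = c a (2 * b - x) + ∑ v ∈ Finset.univ.filter (fun v => 2 * v = x + a), c b v := by
  intro a b x
  have h := hD (Finsupp.single a 1) (Finsupp.single b 1)
  rw [qmul_single_single] at h
  have h2 := congrArg (fun f : ZMod n →₀ k => f x) h
  simp only [Finsupp.add_apply] at h2
  rw [hc, qmul_apply_single_right, qmul_apply_single_left] at h2
  rw [h2]
  congr 1
  · rw [Finset.sum_eq_single (2 * b - x)]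
    · rw [if_pos (by ring), hc]
    · intro u _ hu
      rw [if_neg]
      intro he
      exact hu (by rw [← he]; ring)
    · intro h; exact absurd (Finset.mem_univ _) h
  · rw [Finset.sum_filter]
    apply Finset.sum_congr rfl
    intro v _
    by_cases hv : 2 * v - a = x
    · rw [if_pos hv, if_pos (by rw [← hv]; ring), hc]
    · rw [if_neg hv, if_neg (fun he => hv (by rw [he]; ring))]

lemma L3 [NeZero n] (hK : 1 ≤ K) (c : ZMod n → ZMod n → k)
    (hL1 : ∀ a b x : ZMod n, c (2 * b - a) x
      = c a (2 * b - x) + ∑ v ∈ Finset.univ.filter (fun v => 2 * v = x + a), c b v) :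
    ∀ t x d : ZMod n, c t x = c (t + 2 * d) (x + 2 * d) := by
  have key : ∀ t x : ZMod n, ((4 * K : ℕ) : k) * c t x
      = (∑ b : ZMod n, c (2 * b - t) (2 * b - x))
        + ∑ b : ZMod n, ∑ v ∈ Finset.univ.filter (fun v => 2 * v = (x - t) + 2 * b), c b v := by
    intro t x
    have hterm : ∀ b : ZMod n, c t x
        = c (2 * b - t) (2 * b - x)
          + ∑ v ∈ Finset.univ.filter (fun v => 2 * v = (x - t) + 2 * b), c b v := by
      intro b
      have h := hL1 (2 * b - t) b x
      rw [show 2 * b - (2 * b - t) = t from by ring] at h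
      rw [show x + (2 * b - t) = (x - t) + 2 * b from by ring] at h
      exact h
    calc ((4 * K : ℕ) : k) * c t x = ∑ _b : ZMod n, c t x := by
          rw [Finset.sum_const, Finset.card_univ, ZMod.card, nsmul_eq_mul]
      _ = ∑ b : ZMod n, (c (2 * b - t) (2 * b - x)
            + ∑ v ∈ Finset.univ.filter (fun v => 2 * v = (x - t) + 2 * b), c b v) :=
          Finset.sum_congr rfl fun b _ => hterm b
      _ = _ := Finset.sum_add_distrib
  intro t x d
  have hne : ((4 * K : ℕ) : k) ≠ 0 := Nat.cast_ne_zero.mpr (by omega)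
  apply mul_left_cancel₀ hne
  rw [key t x, key (t + 2 * d) (x + 2 * d)]
  rw [show (x + 2 * d) - (t + 2 * d) = x - t from by ring]
  congr 1
  exact Fintype.sum_equiv (Equiv.addRight d)
    (fun b => c (2 * b - t) (2 * b - x))
    (fun b => c (2 * b - (t + 2 * d)) (2 * b - (x + 2 * d)))
    (fun b => by
      show c (2 * b - t) (2 * b - x) = c (2 * (b + d) - (t + 2 * d)) (2 * (b + d) - (x + 2 * d))
      rw [show 2 * (b + d) - (t + 2 * d) = 2 * b - t from by ring,
          show 2 * (b + d) - (x + 2 * d) = 2 * b - x from by ring])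

end Main

/-- For the dihedral quandle `Z_n` with `n = 4K` over a field of characteristic zero, the matrix
coefficients of any derivation satisfy the symmetries `c_{t+2d}^x = c_t^{2t+2d-x}`,
`c_t^x = -c_t^{x+2K}` and `c_t^x = c_{t+2K}^{x+2K}`. -/
theorem dihedral_4k_derivation_symmetries {k : Type*} [Field k] [CharZero k]
    (K : ℕ) (hK : 1 ≤ K)
    (D : (ZMod (4 * K) →₀ k) →ₗ[k] (ZMod (4 * K) →₀ k))
    (hD : IsDerivation (fun x y : ZMod (4 * K) => 2 * y - x) D)
    (c : ZMod (4 * K) → ZMod (4 * K) → k)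
    (hc : ∀ t u, D (Finsupp.single t 1) u = c t u) :
    ∀ t x d : ZMod (4 * K),
      c (t + 2 * d) x = c t (2 * t + 2 * d - x) ∧
      c t x = - c t (x + 2 * (K : ZMod (4 * K))) ∧
      c t x = c (t + 2 * (K : ZMod (4 * K))) (x + 2 * (K : ZMod (4 * K))) := by
  haveI : NeZero (4 * K) := ⟨by omega⟩
  set tk : ZMod (4 * K) := 2 * (K : ZMod (4 * K)) with htk
  have hL1 := L1 K D hD c hc
  have hL3 := L3 K hK c hL1
  -- the function γ and the key auxiliary identities
  set γ : ZMod (4 * K) → k := fun w => c 0 w + c 0 (w + tk) with hγ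
  -- Sb' : row-pair sums are independent of the row, equal to δ w
  have Sb' : ∀ b w : ZMod (4 * K),
      c b (b + w) + c b (b + w + tk) = c 0 (2 * w) - c 0 (-(2 * w)) := by
    intro b w
    have h := hL1 (2 * b) b (2 * w)
    rw [show 2 * b - 2 * b = (0 : ZMod (4 * K)) from by ring] at h
    rw [fiber_sum K hK _ _ (b + w) (by ring)] at h
    have h3 : c 0 (-(2 * w)) = c (2 * b) (2 * b - 2 * w) := by
      have := hL3 0 (-(2 * w)) b
      rw [show (0 : ZMod (4 * K)) + 2 * b = 2 * b from by ring,
          show -(2 * w) + 2 * b = 2 * b - 2 * w from by ring] at this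
      exact this
    rw [← h3] at h
    rw [← htk] at h
    linear_combination -h
  have Sb : ∀ b w : ZMod (4 * K), c b (b + w) + c b (b + w + tk) = γ w := by
    intro b w
    have h0 := Sb' 0 w
    rw [show (0 : ZMod (4 * K)) + w = w from by ring] at h0
    rw [Sb' b w, hγ, ← h0]
  have hδ : ∀ w : ZMod (4 * K), γ w = c 0 (2 * w) - c 0 (-(2 * w)) := by
    intro w
    have h0 := Sb' 0 w
    rw [show (0 : ZMod (4 * K)) + w = w from by ring] at h0
    rw [hγ, ← h0]
  have h2tk : tk + tk = 0 := two_tk_eq_zero K hK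
  -- P2
  have P2 : ∀ w, γ (-w) = - γ w := by
    intro w
    have a1 := hδ (-w)
    have a2 := hδ w
    rw [show (2 : ZMod (4 * K)) * -w = -(2 * w) from by ring, neg_neg] at a1
    linear_combination a1 + a2
  -- odd reflection for row 0
  have Dodd : ∀ z : ℕ, Odd z → c 0 ((z : ZMod (4 * K))) = c 0 (-(z : ZMod (4 * K))) := by
    intro z hz
    have h := hL1 0 0 (z : ZMod (4 * K))
    rw [show 2 * (0 : ZMod (4 * K)) - 0 = 0 from by ring,
        show 2 * (0 : ZMod (4 * K)) - (z : ZMod (4 * K)) = -(z : ZMod (4 * K)) from by ring,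
        show (z : ZMod (4 * K)) + 0 = (z : ZMod (4 * K)) from by ring,
        odd_fiber_empty K hK z hz, Finset.sum_empty, add_zero] at h
    exact h
  -- P3
  have P3 : ∀ z : ℕ, Odd z → γ ((z : ZMod (4 * K))) = 0 := by
    intro z hz
    have hztk : ((z : ZMod (4 * K))) + tk = (((z + 2 * K : ℕ)) : ZMod (4 * K)) := by
      rw [htk]; push_cast; ring
    have h1 : c 0 ((z : ZMod (4 * K))) = c 0 (-(z : ZMod (4 * K))) := Dodd z hz
    have h2 : c 0 ((z : ZMod (4 * K)) + tk) = c 0 (-(z : ZMod (4 * K)) + tk) := by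
      rw [hztk, Dodd (z + 2 * K) (by rcases hz with ⟨j, rfl⟩; exact ⟨j + K, by ring⟩)]
      have : -(((z + 2 * K : ℕ)) : ZMod (4 * K)) = -(z : ZMod (4 * K)) + tk := by
        rw [htk]; push_cast
        linear_combination -h2tk
      rw [this]
    have hsym : γ ((z : ZMod (4 * K))) = γ (-(z : ZMod (4 * K))) := by
      rw [hγ]
      show c 0 _ + c 0 _ = c 0 _ + c 0 _
      rw [h1, h2]
    rw [P2] at hsym
    linear_combination (1/2 : k) * hsym
  -- P4
  have P4 : ∀ w, γ w + γ (w + (K : ZMod (4 * K))) = 2 * γ (2 * w) := by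
    intro w
    have h1 := hδ w
    have h2 := hδ (w + (K : ZMod (4 * K)))
    rw [show 2 * (w + (K : ZMod (4 * K))) = 2 * w + tk from by rw [htk]; ring,
        show -(2 * w + tk) = -(2 * w) - tk from by ring] at h2
    have hminus : c 0 (-(2 * w) - tk) = c 0 (-(2 * w) + tk) := by
      have : -(2 * w) - tk = -(2 * w) + tk := by linear_combination -h2tk
      rw [this]
    rw [hminus] at h2
    have hg2 : γ (2 * w) = c 0 (2 * w) + c 0 (2 * w + tk) := by rw [hγ]
    have hgm2 : γ (-(2 * w)) = c 0 (-(2 * w)) + c 0 (-(2 * w) + tk) := by rw [hγ]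
    have hP2' : γ (-(2 * w)) = - γ (2 * w) := P2 (2 * w)
    linear_combination h1 + h2 - hg2 + hgm2 - hP2'
  -- γ vanishes identically
  have hγ0 : ∀ u, γ u = 0 := gamma_zero K hK γ P2 P3 P4
  -- conclusions
  intro t x d
  refine ⟨?_, ?_, ?_⟩
  · -- c (t+2d) x = c t (2t+2d-x)
    have h := hL1 t (t + d) x
    rw [show 2 * (t + d) - t = t + 2 * d from by ring,
        show 2 * (t + d) - x = 2 * t + 2 * d - x from by ring] at h
    have hsum : ∑ v ∈ Finset.univ.filter (fun v => 2 * v = x + t), c (t + d) v = 0 := by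
      by_cases hex : ∃ v₀ : ZMod (4 * K), 2 * v₀ = x + t
      · obtain ⟨v₀, hv₀⟩ := hex
        rw [fiber_sum K hK _ _ v₀ hv₀, ← htk]
        have := Sb (t + d) (v₀ - (t + d))
        rw [show (t + d) + (v₀ - (t + d)) = v₀ from by ring] at this
        rw [this, hγ0]
      · have : Finset.univ.filter (fun v : ZMod (4 * K) => 2 * v = x + t) = ∅ := by
          ext v
          simp only [Finset.mem_filter, Finset.mem_univ, true_and, Finset.notMem_empty,
            iff_false]
          exact fun hv => hex ⟨v, hv⟩
        rw [this, Finset.sum_empty]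
    rw [hsum, add_zero] at h
    exact h
  · -- c t x = - c t (x + tk)
    have := Sb t (x - t)
    rw [show t + (x - t) = x from by ring] at this
    rw [hγ0] at this
    linear_combination this
  · -- c t x = c (t+tk) (x+tk)
    exact hL3 t x (K : ZMod (4 * K))
end
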